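/- If the layered Directed Steiner Tree instance constructed from a Monotonic Single-Source k-DTSN instance has a solution of cost C, then the original k-DTSN instance has a feasible solution of cost at most C; specifically, projecting each used edge (u^i, v^i) of the DST solution to the edge (u,v) of the underlying temporal graph yields such a solution. -/

import Mathlib

/-- Edges of the layered Directed Steiner Tree graph (level copies of frame edges
plus zero-weight level-advancing edges). -/
def layerEdges {V : Type*} (E : ℕ → Set (V × V)) : Set ((V × ℕ) × (V × ℕ)) :=
  {p | (p.1.2 = p.2.2 ∧ (p.1.1, p.2.1) ∈ E p.1.2) ∨ (p.1.1 = p.2.1 ∧ p.2.2 = p.1.2 + 1)}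

/-- Weights in the layered graph. -/
def layerWeight {V : Type*} (w : V × V → ℝ) (p : (V × ℕ) × (V × ℕ)) : ℝ :=
  if p.1.2 = p.2.2 then w (p.1.1, p.2.1) else 0

/-- Projection of a layered DST solution back to the underlying temporal graph:
each used level edge `((u,i),(v,i))` is mapped to `(u,v)`; each underlying edge is
counted once. -/
def projSol {V : Type*} [DecidableEq V] (H' : Finset ((V × ℕ) × (V × ℕ))) :
    Finset (V × V) :=
  (H'.filter (fun e => e.1.2 = e.2.2)).image (fun e => (e.1.1, e.2.1))

lemma sum_image_le_aux {α β : Type*} [DecidableEq α] [DecidableEq β] (s : Finset α) (f : α → β)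
    (g : β → ℝ) (hg : ∀ b, 0 ≤ g b) : ∑ b ∈ s.image f, g b ≤ ∑ a ∈ s, g (f a) := by
  induction s using Finset.induction with
  | empty => simp
  | @insert a s ha ih =>
    rw [Finset.image_insert, Finset.sum_insert ha]
    by_cases hf : f a ∈ s.image f
    · rw [Finset.insert_eq_self.2 hf]
      linarith [hg (f a)]
    · rw [Finset.sum_insert hf]
      linarith

/-- if the layered DST instance built from a monotonic single-source
temporal instance has a solution of cost `C`, then projecting its level edges to
the underlying graph gives a feasible temporal solution of cost at most `C`. -/
theorem stmt6 {V : Type*} [DecidableEq V] {k : ℕ}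
    (E : ℕ → Set (V × V)) (hmono : Monotone E)
    (w : V × V → ℝ) (hw : ∀ e, 0 ≤ w e)
    (a : V) (b : Fin k → V) (t : Fin k → ℕ) (ht : Monotone t)
    (H' : Finset ((V × ℕ) × (V × ℕ))) (hsub : ↑H' ⊆ layerEdges E)
    (hfeas' : ∀ i, Relation.ReflTransGen (fun x y => (x, y) ∈ H') (a, 0) (b i, t i)) :
    (∀ i, Relation.ReflTransGen
      (fun u v => (u, v) ∈ projSol H' ∧ (u, v) ∈ E (t i)) a (b i)) ∧
    (∑ e ∈ projSol H', w e) ≤ ∑ e ∈ H', layerWeight w e := by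
  constructor
  · intro i
    -- key lemma: along any H'-path, levels increase and the projection is a path
    have key : ∀ x y : V × ℕ, Relation.ReflTransGen (fun x y => (x, y) ∈ H') x y →
        x.2 ≤ y.2 ∧ Relation.ReflTransGen
          (fun u v => (u, v) ∈ projSol H' ∧ ∃ ℓ ≤ y.2, (u, v) ∈ E ℓ) x.1 y.1 := by
      intro x y h
      induction h with
      | refl => exact ⟨le_rfl, Relation.ReflTransGen.refl⟩
      | @tail y' z' hxy hyz ih =>
        rcases hsub hyz with ⟨hlev, hE⟩ | ⟨hver, hlev⟩
        · refine ⟨hlev ▸ ih.1, ?_⟩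
          refine Relation.ReflTransGen.tail (Relation.ReflTransGen.mono ?_ _ _ ih.2) ?_
          · rintro u v ⟨h1, ℓ, hℓ, h2⟩
            exact ⟨h1, ℓ, hℓ.trans hlev.le, h2⟩
          · refine ⟨?_, y'.2, hlev.le, hE⟩
            exact Finset.mem_image.2 ⟨(y', z'), Finset.mem_filter.2 ⟨hyz, hlev⟩, rfl⟩
        · refine ⟨hlev ▸ ih.1.trans (Nat.le_succ _), ?_⟩
          rw [← hver]
          refine Relation.ReflTransGen.mono ?_ _ _ ih.2
          rintro u v ⟨h1, ℓ, hℓ, h2⟩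
          exact ⟨h1, ℓ, hℓ.trans (hlev ▸ Nat.le_succ _), h2⟩
    have := (key _ _ (hfeas' i)).2
    refine Relation.ReflTransGen.mono ?_ _ _ this
    rintro u v ⟨h1, ℓ, hℓ, h2⟩
    exact ⟨h1, hmono hℓ h2⟩
  · unfold projSol
    calc ∑ e ∈ (H'.filter fun e => e.1.2 = e.2.2).image (fun e => (e.1.1, e.2.1)), w e
        ≤ ∑ e ∈ H'.filter (fun e => e.1.2 = e.2.2), w (e.1.1, e.2.1) := by
          exact sum_image_le_aux _ _ _ hw
      _ = ∑ e ∈ H'.filter (fun e => e.1.2 = e.2.2), layerWeight w e := by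
          refine Finset.sum_congr rfl fun e he => ?_
          simp [layerWeight, (Finset.mem_filter.1 he).2]
      _ ≤ ∑ e ∈ H', layerWeight w e := by
          refine Finset.sum_le_sum_of_subset_of_nonneg (Finset.filter_subset _ _) ?_
          intro e _ _
          unfold layerWeight
          split <;> [exact hw _; exact le_rfl]
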